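/- A set X of houses in a house allocation instance is avoidable (i.e., there exists a Pareto optimal matching whose image is disjoint from X) if and only if for every set R of applicants, the set of houses y ∉ X such that some applicant in R strictly prefers y to all elements of X appearing in that applicant's preference has size at least |R|. Equivalently: for every set R of applicants, |{ y ∈ B \ X : ∃ r ∈ R, r strictly prefers y to every element of X }| ≥ |R|. -/

import Mathlib

/-- `S` is a blocking coalition of the matching `τ`. -/
def IsBlocking {A B : Type*} (pref : A → B → B → Prop) (τ : A → B) (S : Set A) : Prop :=
  S.Nonempty ∧ ∃ τ' : A → B, Function.Injective τ' ∧
    (∀ a ∉ S, τ' a = τ a) ∧ ∀ a ∈ S, pref a (τ' a) (τ a)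

/-- `τ` is a Pareto optimal matching. -/
def IsPOM {A B : Type*} (pref : A → B → B → Prop) (τ : A → B) : Prop :=
  Function.Injective τ ∧ ∀ S : Set A, ¬ IsBlocking pref τ S

/-- a set `X` of houses is avoidable iff for every set `R` of
applicants, the set of houses outside `X` that some applicant of `R` strictly
prefers to every element of `X` has size at least `|R|`. -/
theorem stmt9 {A B : Type*} [Fintype A] [Fintype B]
    (hAB : Fintype.card A ≤ Fintype.card B)
    (pref : A → B → B → Prop) (hpref : ∀ a, IsStrictTotalOrder B (pref a))
    (X : Set B) :
    (∃ τ : A → B, IsPOM pref τ ∧ ∀ a, τ a ∉ X) ↔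
      ∀ R : Finset A,
        R.card ≤ {y : B | y ∉ X ∧ ∃ r ∈ R, ∀ z ∈ X, pref r y z}.ncard := by
  classical
  constructor
  · rintro ⟨τ, ⟨hinj, hblock⟩, hX⟩ R
    have key : ∀ a, ∀ z ∈ X, pref a (τ a) z := by
      intro a z hz
      haveI := hpref a
      rcases trichotomous_of (pref a) (τ a) z with h | h | h
      · exact h
      · exact absurd (h ▸ hz) (hX a)
      · exfalso
        apply hblock {a}
        refine ⟨⟨a, rfl⟩, Function.update τ a z, ?_, ?_, ?_⟩
        · intro x y hxy
          by_cases hx : x = a <;> by_cases hy : y = a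
          · rw [hx, hy]
          · exfalso
            rw [hx, Function.update_self, Function.update_of_ne hy] at hxy
            exact hX y (hxy ▸ hz)
          · exfalso
            rw [hy, Function.update_self, Function.update_of_ne hx] at hxy
            exact hX x (hxy.symm ▸ hz)
          · rw [Function.update_of_ne hx, Function.update_of_ne hy] at hxy
            exact hinj hxy
        · intro b hb
          exact Function.update_of_ne hb _ _
        · intro b hb
          rcases hb with rfl
          rw [Function.update_self]
          exact h
    have hsub : (↑(R.image τ) : Set B) ⊆
        {y : B | y ∉ X ∧ ∃ r ∈ R, ∀ z ∈ X, pref r y z} := by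
      rintro y hy
      simp only [Finset.coe_image, Set.mem_image, Finset.mem_coe] at hy
      obtain ⟨r, hr, rfl⟩ := hy
      exact ⟨hX r, r, hr, key r⟩
    calc R.card = (R.image τ).card := (Finset.card_image_of_injective R hinj).symm
      _ = (↑(R.image τ) : Set B).ncard := (Set.ncard_coe_finset _).symm
      _ ≤ _ := Set.ncard_le_ncard hsub (Set.toFinite _)
  · intro hHall
    set N : A → Finset B :=
      fun a => Finset.univ.filter (fun y => y ∉ X ∧ ∀ z ∈ X, pref a y z) with hN
    have hNmem : ∀ a y, y ∈ N a ↔ y ∉ X ∧ ∀ z ∈ X, pref a y z := by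
      intro a y; simp [hN]
    have hhall : ∀ R : Finset A, R.card ≤ (R.biUnion N).card := by
      intro R
      have hset : {y : B | y ∉ X ∧ ∃ r ∈ R, ∀ z ∈ X, pref r y z}
          = ↑(R.biUnion N) := by
        ext y
        simp only [Finset.coe_biUnion, Set.mem_setOf_eq, Set.mem_iUnion,
          Finset.mem_coe, hNmem]
        tauto
      calc R.card ≤ {y : B | y ∉ X ∧ ∃ r ∈ R, ∀ z ∈ X, pref r y z}.ncard := hHall R
        _ = (↑(R.biUnion N) : Set B).ncard := by rw [hset]
        _ = (R.biUnion N).card := Set.ncard_coe_finset _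
    obtain ⟨τ0, hτ0inj, hτ0mem⟩ :=
      (Finset.all_card_le_biUnion_card_iff_exists_injective N).mp hhall
    -- the set of good matchings
    set 𝒮 : Set (A → B) := {τ | Function.Injective τ ∧ ∀ a, τ a ∈ N a} with h𝒮
    have h𝒮ne : 𝒮.Nonempty := ⟨τ0, hτ0inj, hτ0mem⟩
    set Φ : (A → B) → ℕ := fun τ => ∑ a : A, {z : B | pref a (τ a) z}.ncard with hΦ
    obtain ⟨τ, hτ𝒮, hτmax⟩ := Set.Finite.exists_maximalFor Φ 𝒮 (Set.toFinite 𝒮) h𝒮ne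
    obtain ⟨hτinj, hτmem⟩ := hτ𝒮
    refine ⟨τ, ⟨hτinj, ?_⟩, fun a => ((hNmem _ _).mp (hτmem a)).1⟩
    rintro S ⟨⟨a0, ha0⟩, τ', hτ'inj, hτ'out, hτ'in⟩
    have hτ'mem : ∀ a, τ' a ∈ N a := by
      intro a
      by_cases ha : a ∈ S
      · haveI := hpref a
        obtain ⟨hx, hall⟩ := (hNmem a (τ a)).mp (hτmem a)
        have hbeat : ∀ z ∈ X, pref a (τ' a) z :=
          fun z hz => trans_of (pref a) (hτ'in a ha) (hall z hz)
        refine (hNmem a (τ' a)).mpr ⟨fun hmem => ?_, hbeat⟩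
        exact irrefl_of (pref a) (τ' a) (hbeat _ hmem)
      · rw [hτ'out a ha]; exact hτmem a
    have hlt : Φ τ < Φ τ' := by
      apply Finset.sum_lt_sum
      · intro a _
        by_cases ha : a ∈ S
        · haveI := hpref a
          apply Set.ncard_le_ncard _ (Set.toFinite _)
          intro z hz
          exact trans_of (pref a) (hτ'in a ha) hz
        · rw [hτ'out a ha]
      · refine ⟨a0, Finset.mem_univ _, ?_⟩
        haveI := hpref a0
        apply Set.ncard_lt_ncard _ (Set.toFinite _)
        constructor
        · intro z hz
          exact trans_of (pref a0) (hτ'in a0 ha0) hz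
        · intro hss
          exact irrefl_of (pref a0) (τ a0) (hss (hτ'in a0 ha0))
    exact absurd (hτmax ⟨hτ'inj, hτ'mem⟩ hlt.le) (not_le.mpr hlt)
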